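/- arXiv:2204.12931 — 2 statements merged into one kernel-verified Lean document; each statement's English description precedes it below -/
import Mathlib

section
/- In independent bond percolation on the bunkbed graph G±, for vertices v, w ∈ V, the signed sum d := P(v₊↔w₊) + P(v₋↔w₋) − P(v₊↔w₋) − P(v₋↔w₊) equals P(v₋ ̸↔ v₊ ↔ w₊ ̸↔ w₋) + P(v₊ ̸↔ v₋ ↔ w₋ ̸↔ w₊) − P(v₋ ̸↔ v₊ ↔ w₋ ̸↔ w₊) − P(v₊ ̸↔ v₋ ↔ w₊ ̸↔ w₋), where e.g. {v₋ ̸↔ v₊ ↔ w₊ ̸↔ w₋} denotes the event that v₊ ↔ w₊ but v₋ is not connected to v₊ and w₋ is not connected to w₊. -/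
open Finset

/-- The bunkbed graph of `G`: two copies of `G` (layers `false` = minus, `true` = plus)
plus vertical edges between the copies of each vertex. -/
def bunkbed {V : Type*} (G : SimpleGraph V) : SimpleGraph (V × Bool) where
  Adj x y := (x.2 = y.2 ∧ G.Adj x.1 y.1) ∨ (x.1 = y.1 ∧ x.2 ≠ y.2)
  symm := ⟨by
    rintro ⟨u, s⟩ ⟨v, t⟩ (⟨h1, h2⟩ | ⟨h1, h2⟩)
    · exact Or.inl ⟨h1.symm, h2.symm⟩
    · exact Or.inr ⟨h1.symm, h2.symm⟩⟩
  loopless := ⟨by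
    rintro ⟨u, s⟩ (⟨_, h⟩ | ⟨_, h⟩) <;> simp_all⟩

/-- The random subgraph of the bunkbed graph given by a percolation configuration `ω`. -/
def openSub {V : Type*} (G : SimpleGraph V) (ω : Sym2 (V × Bool) → Bool) :
    SimpleGraph (V × Bool) where
  Adj x y := (bunkbed G).Adj x y ∧ ω s(x, y) = true
  symm := ⟨by
    intro x y h
    exact ⟨(bunkbed G).adj_symm h.1, by rw [Sym2.eq_swap]; exact h.2⟩⟩
  loopless := ⟨fun x h => (bunkbed G).irrefl h.1⟩

/-- `x` and `y` are connected by a path of open edges in configuration `ω`. -/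
def Conn {V : Type*} (G : SimpleGraph V) (ω : Sym2 (V × Bool) → Bool) (x y : V × Bool) : Prop :=
  (openSub G ω).Reachable x y

/-- The probability weight of a configuration under independent bond percolation with
edge probabilities `p`. -/
noncomputable def wt {V : Type*} [Fintype V] [DecidableEq V] (p : Sym2 (V × Bool) → ℝ)
    (ω : Sym2 (V × Bool) → Bool) : ℝ :=
  ∏ e : Sym2 (V × Bool), if ω e then p e else 1 - p e

open Classical in
/-- Probability of the event `A` under independent bond percolation with edge probabilities `p`. -/
noncomputable def prob {V : Type*} [Fintype V] [DecidableEq V] (p : Sym2 (V × Bool) → ℝ)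
    (A : (Sym2 (V × Bool) → Bool) → Prop) : ℝ :=
  ∑ ω : Sym2 (V × Bool) → Bool, if A ω then wt p ω else 0

/-- Edge probabilities on the bunkbed graph built from horizontal weights `pE` (the same in
both layers) and vertical weights `pV`. -/
noncomputable def edgeProb {V : Type*} [DecidableEq V] (pE : Sym2 V → ℝ) (pV : V → ℝ) :
    Sym2 (V × Bool) → ℝ :=
  Sym2.lift ⟨fun x y => if x.1 = y.1 then pV x.1 else if x.2 = y.2 then pE s(x.1, y.1) else 0, by
    intro x y
    beta_reduce
    by_cases h : x.1 = y.1
    · rw [if_pos h, if_pos h.symm, h]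
    · have h' : y.1 ≠ x.1 := fun e => h e.symm
      rw [if_neg h, if_neg h']
      by_cases h2 : x.2 = y.2
      · rw [if_pos h2, if_pos h2.symm, Sym2.eq_swap]
      · rw [if_neg h2, if_neg (fun e => h2 (Eq.symm e))]⟩

/-- decomposition of the signed sum of connection probabilities. -/
theorem signed_sum_decomposition {V : Type*} [Fintype V] [DecidableEq V] (G : SimpleGraph V)
    (p : Sym2 (V × Bool) → ℝ) (hp : ∀ e, p e ∈ Set.Icc (0:ℝ) 1) (v w : V) :
    prob p (fun ω => Conn G ω (v, true) (w, true)) +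
        prob p (fun ω => Conn G ω (v, false) (w, false)) -
        prob p (fun ω => Conn G ω (v, true) (w, false)) -
        prob p (fun ω => Conn G ω (v, false) (w, true)) =
      prob p (fun ω => Conn G ω (v, true) (w, true) ∧
          ¬ Conn G ω (v, false) (v, true) ∧ ¬ Conn G ω (w, true) (w, false)) +
        prob p (fun ω => Conn G ω (v, false) (w, false) ∧
          ¬ Conn G ω (v, true) (v, false) ∧ ¬ Conn G ω (w, false) (w, true)) -
        prob p (fun ω => Conn G ω (v, true) (w, false) ∧
          ¬ Conn G ω (v, false) (v, true) ∧ ¬ Conn G ω (w, false) (w, true)) -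
        prob p (fun ω => Conn G ω (v, false) (w, true) ∧
          ¬ Conn G ω (v, true) (v, false) ∧ ¬ Conn G ω (w, true) (w, false)) := by
  classical
  have csymm : ∀ (ω : Sym2 (V × Bool) → Bool) (x y : V × Bool),
      Conn G ω x y → Conn G ω y x := fun ω x y h => SimpleGraph.Reachable.symm h
  have ctrans : ∀ (ω : Sym2 (V × Bool) → Bool) (x y z : V × Bool),
      Conn G ω x y → Conn G ω y z → Conn G ω x z :=
    fun ω x y z h1 h2 => SimpleGraph.Reachable.trans h1 h2
  simp only [prob]
  rw [← Finset.sum_add_distrib, ← Finset.sum_sub_distrib, ← Finset.sum_sub_distrib,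
    ← Finset.sum_add_distrib, ← Finset.sum_sub_distrib, ← Finset.sum_sub_distrib]
  refine Finset.sum_congr rfl fun ω _ => ?_
  set c := wt p ω with hc
  by_cases ha : Conn G ω (v, true) (v, false) <;>
    by_cases hb : Conn G ω (w, true) (w, false)
  · have hPR : Conn G ω (v, true) (w, true) = Conn G ω (v, true) (w, false) :=
      propext ⟨fun h => ctrans _ _ _ _ h hb, fun h => ctrans _ _ _ _ h (csymm _ _ _ hb)⟩
    have hQS : Conn G ω (v, false) (w, false) = Conn G ω (v, false) (w, true) :=
      propext ⟨fun h => ctrans _ _ _ _ h (csymm _ _ _ hb), fun h => ctrans _ _ _ _ h hb⟩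
    have ha' : Conn G ω (v, false) (v, true) := csymm _ _ _ ha
    simp only [hPR, hQS]
    simp [ha, ha']
  · have hPS : Conn G ω (v, true) (w, true) = Conn G ω (v, false) (w, true) :=
      propext ⟨fun h => ctrans _ _ _ _ (csymm _ _ _ ha) h, fun h => ctrans _ _ _ _ ha h⟩
    have hQR : Conn G ω (v, false) (w, false) = Conn G ω (v, true) (w, false) :=
      propext ⟨fun h => ctrans _ _ _ _ ha h, fun h => ctrans _ _ _ _ (csymm _ _ _ ha) h⟩
    have ha' : Conn G ω (v, false) (v, true) := csymm _ _ _ ha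
    simp only [hPS, hQR]
    simp [ha, ha']
  · have hPR : Conn G ω (v, true) (w, true) = Conn G ω (v, true) (w, false) :=
      propext ⟨fun h => ctrans _ _ _ _ h hb, fun h => ctrans _ _ _ _ h (csymm _ _ _ hb)⟩
    have hQS : Conn G ω (v, false) (w, false) = Conn G ω (v, false) (w, true) :=
      propext ⟨fun h => ctrans _ _ _ _ h (csymm _ _ _ hb), fun h => ctrans _ _ _ _ h hb⟩
    have hb' : Conn G ω (w, false) (w, true) := csymm _ _ _ hb
    simp only [hPR, hQS]
    simp [hb, hb']
  · have ha' : ¬ Conn G ω (v, false) (v, true) := fun h => ha (csymm _ _ _ h)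
    have hb' : ¬ Conn G ω (w, false) (w, true) := fun h => hb (csymm _ _ _ h)
    simp [ha, ha', hb, hb']
end

section
/- Let C_i be a cluster of the percolation configuration restricted to the bunkbed graph minus the vertices w₊, w₋, and suppose u₋ ∈ C_i. Let p_{j±} := P(w_± ∼ C_j), where w' ∼ C_j means some edge from w' to C_j is open, and assume the events {w_± ∼ C_j} over all j and signs are independent. Then P(u₋ ↔ w₋ and w₋ ̸↔ w₊ | cluster structure) = p_{i-}(1 − p_{i+}) ∏_{j≠i} (1 − p_{j-}p_{j+}). -/
open Finset

open Classical in
/-- conditional probability of `{u₋ ↔ w₋, w₋ ̸↔ w₊}` given the cluster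
structure, where for each cluster `j` the attachments of `w₊` (first component) and
`w₋` (second component) are independent with probabilities `pp j` and `pm j`. -/
theorem cluster_connection_prob {I : Type*} [Fintype I] [DecidableEq I]
    (pp pm : I → ℝ) (hpp : ∀ j, pp j ∈ Set.Icc (0:ℝ) 1)
    (hpm : ∀ j, pm j ∈ Set.Icc (0:ℝ) 1) (i : I) :
    (∑ η : I → Bool × Bool,
      if ((η i).2 = true ∧ (η i).1 = false ∧
          ∀ j, j ≠ i → ¬((η j).1 = true ∧ (η j).2 = true)) then
        ∏ j, ((if (η j).1 then pp j else 1 - pp j) * (if (η j).2 then pm j else 1 - pm j))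
      else 0) =
    pm i * (1 - pp i) * ∏ j ∈ Finset.univ.erase i, (1 - pm j * pp j) := by
  set g : I → Bool × Bool → ℝ := fun j a =>
    if (j = i → (a.2 = true ∧ a.1 = false)) ∧ (j ≠ i → ¬(a.1 = true ∧ a.2 = true)) then
      ((if a.1 then pp j else 1 - pp j) * (if a.2 then pm j else 1 - pm j))
    else 0 with hg
  have key : ∀ η : I → Bool × Bool,
      (if ((η i).2 = true ∧ (η i).1 = false ∧
          ∀ j, j ≠ i → ¬((η j).1 = true ∧ (η j).2 = true)) then
        ∏ j, ((if (η j).1 then pp j else 1 - pp j) * (if (η j).2 then pm j else 1 - pm j))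
      else 0) = ∏ j, g j (η j) := by
    intro η
    by_cases h : ((η i).2 = true ∧ (η i).1 = false ∧
        ∀ j, j ≠ i → ¬((η j).1 = true ∧ (η j).2 = true))
    · rw [if_pos h]
      refine Finset.prod_congr rfl fun j _ => ?_
      rw [hg]
      simp only
      have hc : (j = i → (η j).2 = true ∧ (η j).1 = false) ∧
          (j ≠ i → ¬((η j).1 = true ∧ (η j).2 = true)) := by
        constructor
        · rintro rfl; exact ⟨h.1, by simpa using h.2.1⟩
        · intro hj; exact h.2.2 j hj
      rw [if_pos hc]
    · rw [if_neg h]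
      push_neg at h
      by_cases h1 : (η i).2 = true
      · by_cases h2 : (η i).1 = false
        · obtain ⟨j, hj, hj1, hj2⟩ := h h1 h2
          refine (Finset.prod_eq_zero (Finset.mem_univ j) ?_).symm
          rw [hg]; simp only
          rw [if_neg]
          rintro ⟨-, hB⟩
          exact hB hj ⟨hj1, hj2⟩
        · refine (Finset.prod_eq_zero (Finset.mem_univ i) ?_).symm
          rw [hg]; simp only
          rw [if_neg]
          rintro ⟨hA, -⟩
          exact h2 (hA trivial).2
      · refine (Finset.prod_eq_zero (Finset.mem_univ i) ?_).symm
        rw [hg]; simp only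
        rw [if_neg]
        rintro ⟨hA, -⟩
        exact h1 (hA trivial).1
  rw [Finset.sum_congr rfl fun η _ => key η]
  have hswap : (∑ η : I → Bool × Bool, ∏ j, g j (η j)) = ∏ j, ∑ a : Bool × Bool, g j a := by
    rw [Finset.prod_univ_sum (fun _ => (Finset.univ : Finset (Bool × Bool))) g]
    rw [Fintype.piFinset_univ]
  rw [hswap]
  have hi : (∑ a : Bool × Bool, g i a) = pm i * (1 - pp i) := by
    rw [hg]
    rw [Fintype.sum_prod_type]
    simp [Fintype.sum_bool]
    ring
  have hj : ∀ j, j ≠ i → (∑ a : Bool × Bool, g j a) = 1 - pm j * pp j := by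
    intro j hji
    rw [hg]
    rw [Fintype.sum_prod_type]
    simp [Fintype.sum_bool, hji]
    ring
  rw [← Finset.mul_prod_erase Finset.univ _ (Finset.mem_univ i), hi,
    Finset.prod_congr rfl fun j hjm => hj j (Finset.ne_of_mem_erase hjm)]
end
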